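/- Define Ψ(x) = Ω(1/x, 1/(2x)) for x > 0, where Ω(x,y) = ∑_{n∈ℤ} max(0, 1 - |n·x - y|)². Then Ψ(x) = 0 for all x ∈ (0, 1/2], and Ψ(x) > 0 for all x > 1/2. -/

import Mathlib

/-- `Ω(x,y) = ∑_{n∈ℤ} max(0, 1 - |n·x - y|)²`. -/
noncomputable def Omega (x y : ℝ) : ℝ := ∑' n : ℤ, (max 0 (1 - |(n : ℝ) * x - y|)) ^ 2

/-- `Ψ(x) = Ω(1/x, 1/(2x))` for `x > 0`. -/
noncomputable def Psi (x : ℝ) : ℝ := Omega (1 / x) (1 / (2 * x))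

lemma abs_term (x : ℝ) (hx : x ≠ 0) (n : ℤ) :
    |(n : ℝ) * (1 / x) - 1 / (2 * x)| = |2 * (n : ℝ) - 1| / (2 * |x|) := by
  have : (n : ℝ) * (1 / x) - 1 / (2 * x) = (2 * (n : ℝ) - 1) / (2 * x) := by
    field_simp
  rw [this, abs_div, abs_mul]
  norm_num

/-- `Ψ(x) = 0` for `x ∈ (0, 1/2]`, and `Ψ(x) > 0` for `x > 1/2`. -/
theorem stmt_9 :
    (∀ x : ℝ, 0 < x → x ≤ 1 / 2 → Psi x = 0) ∧ (∀ x : ℝ, 1 / 2 < x → 0 < Psi x) := by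
  constructor
  · intro x hx hx2
    unfold Psi Omega
    have : ∀ n : ℤ, (max 0 (1 - |(n : ℝ) * (1 / x) - 1 / (2 * x)|)) ^ 2 = 0 := by
      intro n
      rw [abs_term x hx.ne' n]
      have h1 : (1 : ℝ) ≤ |2 * (n : ℝ) - 1| := by
        have : (2 * n - 1 : ℤ) ≠ 0 := by omega
        have := Int.one_le_abs this
        have : (1 : ℝ) ≤ |(2 * n - 1 : ℤ)| := by exact_mod_cast this
        simpa using this
      have h2 : 2 * |x| ≤ 1 := by rw [abs_of_pos hx]; linarith
      have h3 : (1 : ℝ) ≤ |2 * (n : ℝ) - 1| / (2 * |x|) := by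
        rw [le_div_iff₀ (by positivity)]
        nlinarith
      have : max 0 (1 - |2 * (n : ℝ) - 1| / (2 * |x|)) = 0 :=
        max_eq_left (by linarith)
      rw [this]; ring
    exact (tsum_congr this).trans tsum_zero
  · intro x hx
    have hx0 : 0 < x := lt_trans (by norm_num) hx
    unfold Psi Omega
    set f : ℤ → ℝ := fun n => (max 0 (1 - |(n : ℝ) * (1 / x) - 1 / (2 * x)|)) ^ 2 with hf
    have hsupp : (Function.support f).Finite := by
      apply Set.Finite.subset (Set.finite_Icc (-⌈x⌉) ⌈x⌉)
      intro n hn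
      simp only [Function.support, Set.mem_setOf_eq, hf] at hn
      have hlt : |2 * (n : ℝ) - 1| / (2 * |x|) < 1 := by
        by_contra h
        push_neg at h
        rw [abs_term x hx0.ne' n] at hn
        exact hn (by rw [max_eq_left (by linarith)]; ring)
      rw [div_lt_one (by positivity), abs_of_pos hx0] at hlt
      have habs : |2 * (n : ℝ) - 1| < 2 * x := hlt
      have hxc : (x : ℝ) ≤ ⌈x⌉ := Int.le_ceil x
      have h1 : -(2 * x) < 2 * (n : ℝ) - 1 ∧ 2 * (n : ℝ) - 1 < 2 * x := abs_lt.mp habs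
      have hA : ((2 * n - 1 : ℤ) : ℝ) < 2 * (⌈x⌉ : ℝ) := by push_cast; linarith [h1.2]
      have hB : -(2 * (⌈x⌉ : ℝ)) < ((2 * n - 1 : ℤ) : ℝ) := by push_cast; linarith [h1.1]
      have hA' : (2 * n - 1 : ℤ) < 2 * ⌈x⌉ := by exact_mod_cast hA
      have hB' : -(2 * ⌈x⌉) < (2 * n - 1 : ℤ) := by exact_mod_cast hB
      simp only [Set.mem_Icc]
      omega
    have hsum : Summable f := summable_of_finite_support hsupp
    apply Summable.tsum_pos hsum (fun n => by positivity) 0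
    simp only [hf, Int.cast_zero, zero_mul, zero_sub, abs_neg]
    have h1 : |1 / (2 * x)| < 1 := by
      rw [abs_of_pos (by positivity), div_lt_one (by positivity)]
      linarith
    have h2 : 0 < 1 - |1 / (2 * x)| := by linarith
    rw [max_eq_right h2.le]
    exact pow_pos h2 2
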